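/- Let D ⊆ ℤ² be a digital disk and let S be a bounding curve of D. Then S is a freezing set for (D, c₁) and S is a freezing set for (D, c₂). -/

import Mathlib

/-- Two points of `ℤ²` are `c_u`-adjacent: they are distinct, differ by at most 1 in each
coordinate, and differ in at most `u` coordinates. -/
def adj2 (u : ℕ) (x y : ℤ × ℤ) : Prop :=
  x ≠ y ∧ |x.1 - y.1| ≤ 1 ∧ |x.2 - y.2| ≤ 1 ∧
    ((if x.1 = y.1 then 0 else 1) + (if x.2 = y.2 then 0 else 1) : ℕ) ≤ u

/-- `f` is `c_u`-continuous on `X ⊆ ℤ²`. -/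
def DigContinuous2 (u : ℕ) (X : Set (ℤ × ℤ)) (f : ℤ × ℤ → ℤ × ℤ) : Prop :=
  ∀ x ∈ X, ∀ y ∈ X, adj2 u x y → f x = f y ∨ adj2 u (f x) (f y)

/-- `A` is a freezing set for `(X, c_u)`: every `c_u`-continuous self-map of `X`
fixing `A` pointwise is the identity on `X`. -/
def FreezingSet2 (u : ℕ) (X A : Set (ℤ × ℤ)) : Prop :=
  A ⊆ X ∧ ∀ f : ℤ × ℤ → ℤ × ℤ, Set.MapsTo f X X → DigContinuous2 u X f →
    (∀ a ∈ A, f a = a) → ∀ x ∈ X, f x = x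

/-- `A` is a minimal freezing set for `(X, c_u)`. -/
def MinFreezingSet2 (u : ℕ) (X A : Set (ℤ × ℤ)) : Prop :=
  FreezingSet2 u X A ∧ ∀ A' ⊂ A, ¬ FreezingSet2 u X A'

/-- `q` is a close `c_u`-neighbor of `p` in `X`. -/
def CloseNbr2 (u : ℕ) (X : Set (ℤ × ℤ)) (p q : ℤ × ℤ) : Prop :=
  p ∈ X ∧ q ∈ X ∧ p ≠ q ∧ ∀ x ∈ X, adj2 u x p → x = q ∨ adj2 u x q

/-- A `c_u`-path of length `k` in `Y` from `a` to `b`. -/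
def IsPathIn2 (u : ℕ) (Y : Set (ℤ × ℤ)) (k : ℕ) (s : Fin (k + 1) → ℤ × ℤ)
    (a b : ℤ × ℤ) : Prop :=
  (∀ i, s i ∈ Y) ∧ s 0 = a ∧ s (Fin.last k) = b ∧
    ∀ i : Fin k, s i.castSucc = s i.succ ∨ adj2 u (s i.castSucc) (s i.succ)

/-- `Y` is `c_u`-connected. -/
def ConnectedIn2 (u : ℕ) (Y : Set (ℤ × ℤ)) : Prop :=
  ∀ a ∈ Y, ∀ b ∈ Y, ∃ k s, IsPathIn2 u Y k s a b

/-- `C` is a `c_u`-connected component of `Y`: a maximal `c_u`-connected subset. -/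
def IsComponent2 (u : ℕ) (Y C : Set (ℤ × ℤ)) : Prop :=
  C ⊆ Y ∧ C.Nonempty ∧ ConnectedIn2 u C ∧
    ∀ C', C ⊆ C' → C' ⊆ Y → ConnectedIn2 u C' → C' = C

/-- `S` is a digital `c₂`-closed curve: the trace of an injective cyclic `c₂`-path. -/
def IsClosedCurve2 (S : Set (ℤ × ℤ)) : Prop :=
  ∃ m : ℕ, 0 < m ∧ ∃ s : ZMod m → ℤ × ℤ, Function.Injective s ∧ Set.range s = S ∧
    ∀ i, s i = s (i + 1) ∨ adj2 2 (s i) (s (i + 1))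

/-- `S` is a bounding curve of the digital disk `D`: `S` is a `c₂`-closed curve,
`ℤ² \ S` has exactly two `c₁`-components, one finite (the interior `I`) and one
infinite, and `D = S ∪ I`. -/
def IsBoundingCurve (S D : Set (ℤ × ℤ)) : Prop :=
  IsClosedCurve2 S ∧ ∃ I E : Set (ℤ × ℤ), I ≠ E ∧ I.Finite ∧ E.Infinite ∧
    {C | IsComponent2 1 Sᶜ C} = {I, E} ∧ D = S ∪ I

/-- A digital line segment: a `c₂`-connected set of two or more collinear points. -/
def IsSegment2 (T : Set (ℤ × ℤ)) : Prop :=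
  ConnectedIn2 2 T ∧ (∃ p ∈ T, ∃ q ∈ T, p ≠ q) ∧
    ∃ a b c : ℤ, ¬(a = 0 ∧ b = 0) ∧ ∀ p ∈ T, a * p.1 + b * p.2 = c

/-- A horizontal digital line segment. -/
def HorizSeg (T : Set (ℤ × ℤ)) : Prop := IsSegment2 T ∧ ∀ p ∈ T, ∀ q ∈ T, p.2 = q.2

/-- A vertical digital line segment. -/
def VertSeg (T : Set (ℤ × ℤ)) : Prop := IsSegment2 T ∧ ∀ p ∈ T, ∀ q ∈ T, p.1 = q.1

/-- A slanted digital line segment (slope `1` or `-1`). -/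
def SlantSeg (T : Set (ℤ × ℤ)) : Prop := IsSegment2 T ∧
  ((∀ p ∈ T, ∀ q ∈ T, p.1 - q.1 = p.2 - q.2) ∨ (∀ p ∈ T, ∀ q ∈ T, p.1 - q.1 = -(p.2 - q.2)))

/-- `T` is a maximal horizontal segment of the curve `S`. -/
def MaxHorizSegOf (S T : Set (ℤ × ℤ)) : Prop :=
  T ⊆ S ∧ HorizSeg T ∧ ∀ T', T ⊆ T' → T' ⊆ S → HorizSeg T' → T' = T

/-- `T` is a maximal vertical segment of the curve `S`. -/
def MaxVertSegOf (S T : Set (ℤ × ℤ)) : Prop :=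
  T ⊆ S ∧ VertSeg T ∧ ∀ T', T ⊆ T' → T' ⊆ S → VertSeg T' → T' = T

/-- `T` is a maximal slanted segment of the curve `S`. -/
def MaxSlantSegOf (S T : Set (ℤ × ℤ)) : Prop :=
  T ⊆ S ∧ SlantSeg T ∧ ∀ T', T ⊆ T' → T' ⊆ S → SlantSeg T' → T' = T

/-- `p` is an endpoint of the segment `T`: it has at most one `c₂`-neighbor in `T`. -/
def IsEndpointOf (T : Set (ℤ × ℤ)) (p : ℤ × ℤ) : Prop :=
  p ∈ T ∧ {q ∈ T | adj2 2 p q}.Subsingleton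

/-- The canonical embedding `ℤ² → ℝ²`. -/
def toR2 (p : ℤ × ℤ) : ℝ × ℝ := ((p.1 : ℝ), (p.2 : ℝ))

/-- `D` is digitally convex: `D = H ∩ ℤ²`, where `H` is the convex hull of `D` in `ℝ²`. -/
def DigitallyConvex (D : Set (ℤ × ℤ)) : Prop :=
  ∀ p : ℤ × ℤ, toR2 p ∈ convexHull ℝ (toR2 '' D) → p ∈ D

/-- A unit horizontal or vertical direction. -/
def isAxisDir (d : ℤ × ℤ) : Prop := (|d.1| = 1 ∧ d.2 = 0) ∨ (d.1 = 0 ∧ |d.2| = 1)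

/-- A unit diagonal direction. -/
def isDiagDir (d : ℤ × ℤ) : Prop := |d.1| = 1 ∧ |d.2| = 1

def dot2 (d e : ℤ × ℤ) : ℤ := d.1 * e.1 + d.2 * e.2

/-- `e` is a king-move direction lying strictly inside the angle (of measure less than
180°) with side directions `d₁` and `d₂`. -/
def InSector (d₁ d₂ e : ℤ × ℤ) : Prop :=
  (isAxisDir e ∨ isDiagDir e) ∧ 0 ≤ dot2 e d₁ ∧ 0 ≤ dot2 e d₂ ∧ e ≠ d₁ ∧ e ≠ d₂

/-- `c` lies strictly on the same side of the line through `T` as some point of `I`. -/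
def InteriorSideOf (T I : Set (ℤ × ℤ)) (c : ℤ × ℤ) : Prop :=
  ∃ a b k : ℤ, (∀ q ∈ T, a * q.1 + b * q.2 = k) ∧ k < a * c.1 + b * c.2 ∧
    ∃ w ∈ I, k < a * w.1 + b * w.2

/-- `X` is thick with respect to its bounding curve `S` (whose interior is `X \ S`):
(i) every non-endpoint `p` of a maximal slanted segment of `S` has a point `c ∈ X`,
`c₂`- but not `c₁`-adjacent to `p`, on the interior side of the segment;
(ii) every vertex of a 90° interior angle of `S` with horizontal and vertical sides has
a point of the interior `c₂`- but not `c₁`-adjacent to it, and every vertex of a 90°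
interior angle with slanted sides has a point of the interior `c₁`-adjacent to it;
(iii) every vertex `p` of a 135° interior angle of `S` has points `b, b' ∈ X` inside the
angle with `b` `c₂`- but not `c₁`-adjacent to `p` and `b'` `c₁`-adjacent to `p`.
A vertex with side directions `d₁, d₂` has an interior angle (of measure < 180°)
when some king direction strictly inside the angle leads into `X`. -/
def ThickWRT (X S : Set (ℤ × ℤ)) : Prop :=
  (∀ T, MaxSlantSegOf S T → ∀ p ∈ T, ¬IsEndpointOf T p →
      ∃ c ∈ X, adj2 2 c p ∧ ¬adj2 1 c p ∧ InteriorSideOf T (X \ S) c) ∧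
  ∃ m : ℕ, 0 < m ∧ ∃ s : ZMod m → ℤ × ℤ, Function.Injective s ∧ Set.range s = S ∧
    (∀ i, s i = s (i + 1) ∨ adj2 2 (s i) (s (i + 1))) ∧
    ∀ i : ZMod m,
      (isAxisDir (s (i - 1) - s i) ∧ isAxisDir (s (i + 1) - s i) ∧
          dot2 (s (i - 1) - s i) (s (i + 1) - s i) = 0 ∧
          (∃ e, InSector (s (i - 1) - s i) (s (i + 1) - s i) e ∧ s i + e ∈ X) →
        ∃ q ∈ X \ S, adj2 2 q (s i) ∧ ¬adj2 1 q (s i)) ∧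
      (isDiagDir (s (i - 1) - s i) ∧ isDiagDir (s (i + 1) - s i) ∧
          dot2 (s (i - 1) - s i) (s (i + 1) - s i) = 0 ∧
          (∃ e, InSector (s (i - 1) - s i) (s (i + 1) - s i) e ∧ s i + e ∈ X) →
        ∃ q ∈ X \ S, adj2 1 q (s i)) ∧
      (((isAxisDir (s (i - 1) - s i) ∧ isDiagDir (s (i + 1) - s i)) ∨
          (isDiagDir (s (i - 1) - s i) ∧ isAxisDir (s (i + 1) - s i))) ∧
          dot2 (s (i - 1) - s i) (s (i + 1) - s i) = -1 ∧
          (∃ e, InSector (s (i - 1) - s i) (s (i + 1) - s i) e ∧ s i + e ∈ X) →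
        ∃ b b' : ℤ × ℤ, InSector (s (i - 1) - s i) (s (i + 1) - s i) b ∧
          InSector (s (i - 1) - s i) (s (i + 1) - s i) b' ∧
          s i + b ∈ X ∧ s i + b' ∈ X ∧
          adj2 2 (s i + b) (s i) ∧ ¬adj2 1 (s i + b) (s i) ∧ adj2 1 (s i + b') (s i))

/-! ### Auxiliary machinery for the proof -/

lemma adj2_symm {u : ℕ} {x y : ℤ × ℤ} (h : adj2 u x y) : adj2 u y x := by
  obtain ⟨h1, h2, h3, h4⟩ := h
  refine ⟨Ne.symm h1, by rwa [abs_sub_comm], by rwa [abs_sub_comm], ?_⟩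
  have e1 : (y.1 = x.1) ↔ (x.1 = y.1) := eq_comm
  have e2 : (y.2 = x.2) ↔ (x.2 = y.2) := eq_comm
  rw [if_congr e1 rfl rfl, if_congr e2 rfl rfl]
  exact h4

/-- One-step relation underlying paths. -/
def Step2 (u : ℕ) (Y : Set (ℤ × ℤ)) (p q : ℤ × ℤ) : Prop :=
  p ∈ Y ∧ q ∈ Y ∧ (p = q ∨ adj2 u p q)

lemma path_to_reach {u : ℕ} {Y : Set (ℤ × ℤ)} {k : ℕ} {s : Fin (k + 1) → ℤ × ℤ}
    {a b : ℤ × ℤ} (h : IsPathIn2 u Y k s a b) :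
    Relation.ReflTransGen (Step2 u Y) a b := by
  obtain ⟨hmem, h0, hl, hstep⟩ := h
  have key : ∀ i : Fin (k + 1), Relation.ReflTransGen (Step2 u Y) a (s i) := by
    intro i
    induction i using Fin.induction with
    | zero => rw [h0]
    | succ i ih => exact ih.tail ⟨hmem i.castSucc, hmem i.succ, hstep i⟩
  rw [← hl]; exact key _

lemma reach_to_path {u : ℕ} {Y : Set (ℤ × ℤ)} {a b : ℤ × ℤ} (ha : a ∈ Y)
    (h : Relation.ReflTransGen (Step2 u Y) a b) :
    ∃ k s, IsPathIn2 u Y k s a b := by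
  induction h with
  | refl => exact ⟨0, fun _ => a, fun _ => ha, rfl, rfl, fun i => i.elim0⟩
  | @tail b c hab hbc ih =>
    obtain ⟨k, s, hmem, h0, hl, hstep⟩ := ih
    refine ⟨k + 1, Fin.snoc s c, ?_, ?_, ?_, ?_⟩
    · intro i
      induction i using Fin.lastCases with
      | last => rw [Fin.snoc_last]; exact hbc.2.1
      | cast i => rw [Fin.snoc_castSucc]; exact hmem i
    · rw [show (0 : Fin (k + 2)) = Fin.castSucc 0 from rfl, Fin.snoc_castSucc]; exact h0
    · rw [Fin.snoc_last]
    · intro i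
      induction i using Fin.lastCases with
      | last =>
        rw [Fin.succ_last, Fin.snoc_castSucc, Fin.snoc_last, hl]
        exact hbc.2.2
      | cast j =>
        rw [Fin.succ_castSucc, Fin.snoc_castSucc, Fin.snoc_castSucc]
        exact hstep j

/-- A point of `Sᶜ` that is `c₁`-adjacent to a point of a `c₁`-component `I` of `Sᶜ`
belongs to `I`. -/
lemma absorb {S I : Set (ℤ × ℤ)} (hI : IsComponent2 1 Sᶜ I) {y z : ℤ × ℤ}
    (hyS : y ∉ S) (hz : z ∈ I) (hadj : adj2 1 y z) : y ∈ I := by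
  obtain ⟨hsub, hne, hconn, hmax⟩ := hI
  have reach : ∀ b ∈ I, Relation.ReflTransGen (Step2 1 (insert y I)) y b := by
    intro b hb
    obtain ⟨k, s, hp⟩ := hconn z hz b hb
    have h1 : Relation.ReflTransGen (Step2 1 I) z b := path_to_reach hp
    have h2 : Relation.ReflTransGen (Step2 1 (insert y I)) z b :=
      Relation.ReflTransGen.mono (r := Step2 1 I) (p := Step2 1 (insert y I))
        (fun p q hpq => ⟨Set.mem_insert_of_mem _ hpq.1, Set.mem_insert_of_mem _ hpq.2.1,
          hpq.2.2⟩) z b h1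
    exact Relation.ReflTransGen.head
      ⟨Set.mem_insert _ _, Set.mem_insert_of_mem _ hz, Or.inr hadj⟩ h2
  have symmStep : Symmetric (Step2 1 (insert y I)) :=
    fun p q hpq => ⟨hpq.2.1, hpq.1, hpq.2.2.imp Eq.symm adj2_symm⟩
  have key : ConnectedIn2 1 (insert y I) := by
    intro a ha b hb
    have hr : Relation.ReflTransGen (Step2 1 (insert y I)) a b := by
      rcases ha with rfl | ha
      · rcases hb with rfl | hb
        · exact Relation.ReflTransGen.refl
        · exact reach b hb
      · rcases hb with rfl | hb
        · exact (@Relation.ReflTransGen.symmetric _ _ ⟨fun _ _ h => symmStep h⟩).symm _ _ (reach a ha)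
        · exact ((@Relation.ReflTransGen.symmetric _ (Step2 1 (insert y I)) ⟨fun _ _ h => symmStep h⟩).symm _ _ (reach a ha)).trans (reach b hb)
    exact reach_to_path ha hr
  have heq := hmax (insert y I) (Set.subset_insert _ _)
    (by
      intro p hp
      rcases hp with rfl | hp
      · exact hyS
      · exact hsub hp) key
  rw [← heq]
  exact Set.mem_insert _ _

/-- Starting from a point of the finite interior `I` and walking in a `c₁`-unit
direction, one stays in `I` for a while and then hits `S`. -/
lemma exitDir {S I : Set (ℤ × ℤ)} (hI : IsComponent2 1 Sᶜ I) (hfin : I.Finite)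
    (d1 d2 : ℤ) (hd : |d1| + |d2| = 1) {x : ℤ × ℤ} (hx : x ∈ I) :
    ∃ n : ℕ, (x.1 + ((n : ℤ) + 1) * d1, x.2 + ((n : ℤ) + 1) * d2) ∈ S ∧
      ∀ j : ℕ, j ≤ n → (x.1 + (j : ℤ) * d1, x.2 + (j : ℤ) * d2) ∈ I := by
  classical
  have hone : d1 = 0 ∨ d2 = 0 := by
    have h1 := abs_nonneg d1
    have h2 := abs_nonneg d2
    have : |d1| = 0 ∨ |d2| = 0 := by omega
    exact this.imp abs_eq_zero.mp abs_eq_zero.mp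
  have hnot00 : ¬(d1 = 0 ∧ d2 = 0) := by
    rintro ⟨rfl, rfl⟩
    simp at hd
  have hex : ∃ n : ℕ, (x.1 + ((n : ℤ) + 1) * d1, x.2 + ((n : ℤ) + 1) * d2) ∉ I := by
    by_contra hcon
    push_neg at hcon
    have hinj : Function.Injective
        (fun n : ℕ => ((x.1 + ((n : ℤ) + 1) * d1, x.2 + ((n : ℤ) + 1) * d2) : ℤ × ℤ)) := by
      intro a b hab
      simp only [Prod.mk.injEq] at hab
      have h1 : ((a : ℤ) - b) * d1 = 0 := by linear_combination hab.1
      have h2 : ((a : ℤ) - b) * d2 = 0 := by linear_combination hab.2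
      rcases mul_eq_zero.mp h1 with h | hd1
      · have : (a : ℤ) = b := by omega
        exact_mod_cast this
      rcases mul_eq_zero.mp h2 with h | hd2
      · have : (a : ℤ) = b := by omega
        exact_mod_cast this
      · exact absurd ⟨hd1, hd2⟩ hnot00
    exact (Set.infinite_of_injective_forall_mem hinj (fun n => hcon n)) hfin
  set n := Nat.find hex with hn
  have hnotI := Nat.find_spec hex
  have hmin : ∀ j : ℕ, j ≤ n → (x.1 + (j : ℤ) * d1, x.2 + (j : ℤ) * d2) ∈ I := by
    intro j hj
    cases j with
    | zero => simpa using hx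
    | succ m =>
      have hlt : m < n := by omega
      have hm := Nat.find_min hex hlt
      have e : ((m + 1 : ℕ) : ℤ) = (m : ℤ) + 1 := by push_cast; ring
      rw [e]
      exact not_not.mp hm
  refine ⟨n, ?_, hmin⟩
  by_contra hnS
  have hadj : adj2 1 (x.1 + ((n : ℤ) + 1) * d1, x.2 + ((n : ℤ) + 1) * d2)
      (x.1 + (n : ℤ) * d1, x.2 + (n : ℤ) * d2) := by
    refine ⟨?_, ?_, ?_, ?_⟩
    · intro hcon
      rw [Prod.mk.injEq] at hcon
      have hd1 : d1 = 0 := by linear_combination hcon.1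
      have hd2 : d2 = 0 := by linear_combination hcon.2
      exact hnot00 ⟨hd1, hd2⟩
    · show |x.1 + ((n : ℤ) + 1) * d1 - (x.1 + (n : ℤ) * d1)| ≤ 1
      have e : x.1 + ((n : ℤ) + 1) * d1 - (x.1 + (n : ℤ) * d1) = d1 := by ring
      rw [e]
      have := abs_nonneg d2
      omega
    · show |x.2 + ((n : ℤ) + 1) * d2 - (x.2 + (n : ℤ) * d2)| ≤ 1
      have e : x.2 + ((n : ℤ) + 1) * d2 - (x.2 + (n : ℤ) * d2) = d2 := by ring
      rw [e]
      have := abs_nonneg d1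
      omega
    · rcases hone with h | h
      · subst h
        simp only [mul_zero, add_zero]
        split_ifs <;> simp_all
      · subst h
        simp only [mul_zero, add_zero]
        split_ifs <;> simp_all
  exact hnotI (absorb hI hnS (hmin n le_rfl) hadj)

/-- Rigidity along a horizontal segment whose endpoints are fixed: the first
coordinate of every image is determined. -/
lemma horizRigid {u : ℕ} (hu : 1 ≤ u) {X : Set (ℤ × ℤ)} {f : ℤ × ℤ → ℤ × ℤ}
    (hf : DigContinuous2 u X f) (x0 y0 : ℤ) (k : ℕ)
    (hmem : ∀ i : ℕ, i ≤ k → ((x0 + (i : ℤ), y0) : ℤ × ℤ) ∈ X)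
    (h0 : f (x0, y0) = (x0, y0)) (hk : f (x0 + (k : ℤ), y0) = (x0 + (k : ℤ), y0)) :
    ∀ i : ℕ, i ≤ k → (f (x0 + (i : ℤ), y0)).1 = x0 + (i : ℤ) := by
  have hadj : ∀ i : ℕ, i + 1 ≤ k → adj2 u (x0 + (i : ℤ), y0) (x0 + ((i + 1 : ℕ) : ℤ), y0) := by
    intro i hi
    refine ⟨?_, ?_, ?_, ?_⟩
    · intro hcon
      rw [Prod.mk.injEq] at hcon
      have := hcon.1
      push_cast at this
      omega
    · show |x0 + (i : ℤ) - (x0 + ((i + 1 : ℕ) : ℤ))| ≤ 1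
      have e : x0 + (i : ℤ) - (x0 + ((i + 1 : ℕ) : ℤ)) = -1 := by push_cast; ring
      rw [e]; norm_num
    · show |y0 - y0| ≤ 1
      simp
    · have hne : ¬(x0 + (i : ℤ) = x0 + ((i + 1 : ℕ) : ℤ)) := by push_cast; omega
      rw [if_neg hne, if_pos rfl]
      omega
  have hsb : ∀ i : ℕ, i + 1 ≤ k →
      |(f (x0 + ((i + 1 : ℕ) : ℤ), y0)).1 - (f (x0 + (i : ℤ), y0)).1| ≤ 1 := by
    intro i hi
    rcases hf _ (hmem i (by omega)) _ (hmem (i + 1) hi) (hadj i hi) with h | h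
    · rw [h]; simp
    · rw [abs_sub_comm]; exact h.2.1
  have upper : ∀ i : ℕ, i ≤ k → (f (x0 + (i : ℤ), y0)).1 ≤ x0 + (i : ℤ) := by
    intro i
    induction i with
    | zero =>
      intro _
      simp only [Nat.cast_zero, add_zero]
      rw [h0]
    | succ i ih =>
      intro hi
      have h1 := ih (by omega)
      have h2 := abs_le.mp (hsb i hi)
      push_cast at h1 h2 ⊢
      linarith [h2.2]
  have lower : ∀ j i : ℕ, i + j = k → x0 + (i : ℤ) ≤ (f (x0 + (i : ℤ), y0)).1 := by
    intro j
    induction j with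
    | zero =>
      intro i hik
      have : i = k := by omega
      subst this
      rw [hk]
    | succ j ih =>
      intro i hik
      have h1 := ih (i + 1) (by omega)
      have h2 := abs_le.mp (hsb i (by omega))
      push_cast at h1 h2 ⊢
      linarith [h2.2]
  intro i hi
  exact le_antisymm (upper i hi) (lower (k - i) i (by omega))

/-- Rigidity along a vertical segment whose endpoints are fixed: the second
coordinate of every image is determined. -/
lemma vertRigid {u : ℕ} (hu : 1 ≤ u) {X : Set (ℤ × ℤ)} {f : ℤ × ℤ → ℤ × ℤ}
    (hf : DigContinuous2 u X f) (x0 y0 : ℤ) (k : ℕ)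
    (hmem : ∀ i : ℕ, i ≤ k → ((x0, y0 + (i : ℤ)) : ℤ × ℤ) ∈ X)
    (h0 : f (x0, y0) = (x0, y0)) (hk : f (x0, y0 + (k : ℤ)) = (x0, y0 + (k : ℤ))) :
    ∀ i : ℕ, i ≤ k → (f (x0, y0 + (i : ℤ))).2 = y0 + (i : ℤ) := by
  have hadj : ∀ i : ℕ, i + 1 ≤ k → adj2 u (x0, y0 + (i : ℤ)) (x0, y0 + ((i + 1 : ℕ) : ℤ)) := by
    intro i hi
    refine ⟨?_, ?_, ?_, ?_⟩
    · intro hcon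
      rw [Prod.mk.injEq] at hcon
      have := hcon.2
      push_cast at this
      omega
    · show |x0 - x0| ≤ 1
      simp
    · show |y0 + (i : ℤ) - (y0 + ((i + 1 : ℕ) : ℤ))| ≤ 1
      have e : y0 + (i : ℤ) - (y0 + ((i + 1 : ℕ) : ℤ)) = -1 := by push_cast; ring
      rw [e]; norm_num
    · have hne : ¬(y0 + (i : ℤ) = y0 + ((i + 1 : ℕ) : ℤ)) := by push_cast; omega
      rw [if_pos rfl, if_neg hne]
      omega
  have hsb : ∀ i : ℕ, i + 1 ≤ k →
      |(f (x0, y0 + ((i + 1 : ℕ) : ℤ))).2 - (f (x0, y0 + (i : ℤ))).2| ≤ 1 := by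
    intro i hi
    rcases hf _ (hmem i (by omega)) _ (hmem (i + 1) hi) (hadj i hi) with h | h
    · rw [h]; simp
    · rw [abs_sub_comm]; exact h.2.2.1
  have upper : ∀ i : ℕ, i ≤ k → (f (x0, y0 + (i : ℤ))).2 ≤ y0 + (i : ℤ) := by
    intro i
    induction i with
    | zero =>
      intro _
      simp only [Nat.cast_zero, add_zero]
      rw [h0]
    | succ i ih =>
      intro hi
      have h1 := ih (by omega)
      have h2 := abs_le.mp (hsb i hi)
      push_cast at h1 h2 ⊢
      linarith [h2.2]
  have lower : ∀ j i : ℕ, i + j = k → y0 + (i : ℤ) ≤ (f (x0, y0 + (i : ℤ))).2 := by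
    intro j
    induction j with
    | zero =>
      intro i hik
      have : i = k := by omega
      subst this
      rw [hk]
    | succ j ih =>
      intro i hik
      have h1 := ih (i + 1) (by omega)
      have h2 := abs_le.mp (hsb i (by omega))
      push_cast at h1 h2 ⊢
      linarith [h2.2]
  intro i hi
  exact le_antisymm (upper i hi) (lower (k - i) i (by omega))

/-- If `D ⊆ ℤ²` is a digital disk with bounding curve `S`, then `S` is a freezing set
for `(D, c₁)` and for `(D, c₂)`. -/
theorem bounding_curve_freezes (D S : Set (ℤ × ℤ)) (h : IsBoundingCurve S D) :
    FreezingSet2 1 D S ∧ FreezingSet2 2 D S := by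
  obtain ⟨hcc, I, E, hne, hIfin, hEinf, hcomp, hD⟩ := h
  have hI : IsComponent2 1 Sᶜ I := by
    have hmem : I ∈ ({I, E} : Set (Set (ℤ × ℤ))) := Set.mem_insert _ _
    rw [← hcomp] at hmem
    exact hmem
  have hSD : S ⊆ D := by rw [hD]; exact Set.subset_union_left
  have hID : I ⊆ D := by rw [hD]; exact Set.subset_union_right
  have key : ∀ u : ℕ, 1 ≤ u → ∀ f : ℤ × ℤ → ℤ × ℤ, DigContinuous2 u D f →
      (∀ a ∈ S, f a = a) → ∀ x ∈ D, f x = x := by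
    intro u hu f hf hfix x hx
    rw [hD] at hx
    rcases hx with hxS | hxI
    · exact hfix x hxS
    -- horizontal segment through x
    have hfx1 : (f x).1 = x.1 := by
      obtain ⟨nL, haS, haI⟩ := exitDir hI hIfin (-1) 0 (by norm_num) hxI
      obtain ⟨nR, hbS, hbI⟩ := exitDir hI hIfin 1 0 (by norm_num) hxI
      have haS' : ((x.1 - (nL : ℤ) - 1, x.2) : ℤ × ℤ) ∈ S := by
        have e : ((x.1 + ((nL : ℤ) + 1) * (-1 : ℤ), x.2 + ((nL : ℤ) + 1) * (0 : ℤ)) : ℤ × ℤ)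
            = (x.1 - (nL : ℤ) - 1, x.2) := by
          simp only [Prod.mk.injEq]; constructor <;> ring
        rwa [e] at haS
      have haI' : ∀ j : ℕ, j ≤ nL → ((x.1 - (j : ℤ), x.2) : ℤ × ℤ) ∈ I := by
        intro j hj
        have hm := haI j hj
        have e : ((x.1 + (j : ℤ) * (-1 : ℤ), x.2 + (j : ℤ) * (0 : ℤ)) : ℤ × ℤ)
            = (x.1 - (j : ℤ), x.2) := by
          simp only [Prod.mk.injEq]; constructor <;> ring
        rwa [e] at hm
      have hbS' : ((x.1 + (nR : ℤ) + 1, x.2) : ℤ × ℤ) ∈ S := by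
        have e : ((x.1 + ((nR : ℤ) + 1) * (1 : ℤ), x.2 + ((nR : ℤ) + 1) * (0 : ℤ)) : ℤ × ℤ)
            = (x.1 + (nR : ℤ) + 1, x.2) := by
          simp only [Prod.mk.injEq]; constructor <;> ring
        rwa [e] at hbS
      have hbI' : ∀ j : ℕ, j ≤ nR → ((x.1 + (j : ℤ), x.2) : ℤ × ℤ) ∈ I := by
        intro j hj
        have hm := hbI j hj
        have e : ((x.1 + (j : ℤ) * (1 : ℤ), x.2 + (j : ℤ) * (0 : ℤ)) : ℤ × ℤ)
            = (x.1 + (j : ℤ), x.2) := by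
          simp only [Prod.mk.injEq]; constructor <;> ring
        rwa [e] at hm
      set x0 : ℤ := x.1 - (nL : ℤ) - 1 with hx0
      have hmem : ∀ i : ℕ, i ≤ nL + nR + 2 → ((x0 + (i : ℤ), x.2) : ℤ × ℤ) ∈ D := by
        intro i hi
        rcases Nat.eq_zero_or_pos i with rfl | hipos
        · have e : ((x0 + ((0 : ℕ) : ℤ), x.2) : ℤ × ℤ) = (x0, x.2) := by
            simp only [Prod.mk.injEq]; exact ⟨by push_cast; ring, by trivial⟩
          rw [e]; exact hSD haS'
        rcases le_or_gt i (nL + 1) with hle | hgt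
        · have hm := haI' (nL + 1 - i) (by omega)
          have e : ((x.1 - ((nL + 1 - i : ℕ) : ℤ), x.2) : ℤ × ℤ) = (x0 + (i : ℤ), x.2) := by
            simp only [Prod.mk.injEq]; exact ⟨by omega, by trivial⟩
          rw [e] at hm; exact hID hm
        rcases le_or_gt i (nL + nR + 1) with hle2 | hgt2
        · have hm := hbI' (i - (nL + 1)) (by omega)
          have e : ((x.1 + ((i - (nL + 1) : ℕ) : ℤ), x.2) : ℤ × ℤ) = (x0 + (i : ℤ), x.2) := by
            simp only [Prod.mk.injEq]; exact ⟨by omega, by trivial⟩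
          rw [e] at hm; exact hID hm
        · have e : ((x.1 + (nR : ℤ) + 1, x.2) : ℤ × ℤ) = (x0 + (i : ℤ), x.2) := by
            simp only [Prod.mk.injEq]; exact ⟨by omega, by trivial⟩
          rw [e] at hbS'; exact hSD hbS'
      have h0 : f (x0, x.2) = (x0, x.2) := hfix _ haS'
      have hk' : f (x0 + ((nL + nR + 2 : ℕ) : ℤ), x.2) = (x0 + ((nL + nR + 2 : ℕ) : ℤ), x.2) := by
        have e : ((x.1 + (nR : ℤ) + 1, x.2) : ℤ × ℤ)
            = (x0 + ((nL + nR + 2 : ℕ) : ℤ), x.2) := by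
          simp only [Prod.mk.injEq]; exact ⟨by omega, by trivial⟩
        rw [← e]; exact hfix _ hbS'
      have hr := horizRigid hu hf x0 x.2 (nL + nR + 2) hmem h0 hk' (nL + 1) (by omega)
      have ex : ((x0 + ((nL + 1 : ℕ) : ℤ), x.2) : ℤ × ℤ) = x := by
        have e1 : x0 + ((nL + 1 : ℕ) : ℤ) = x.1 := by omega
        rw [e1]
      rw [ex] at hr
      omega
    -- vertical segment through x
    have hfx2 : (f x).2 = x.2 := by
      obtain ⟨nL, haS, haI⟩ := exitDir hI hIfin 0 (-1) (by norm_num) hxI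
      obtain ⟨nR, hbS, hbI⟩ := exitDir hI hIfin 0 1 (by norm_num) hxI
      have haS' : ((x.1, x.2 - (nL : ℤ) - 1) : ℤ × ℤ) ∈ S := by
        have e : ((x.1 + ((nL : ℤ) + 1) * (0 : ℤ), x.2 + ((nL : ℤ) + 1) * (-1 : ℤ)) : ℤ × ℤ)
            = (x.1, x.2 - (nL : ℤ) - 1) := by
          simp only [Prod.mk.injEq]; constructor <;> ring
        rwa [e] at haS
      have haI' : ∀ j : ℕ, j ≤ nL → ((x.1, x.2 - (j : ℤ)) : ℤ × ℤ) ∈ I := by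
        intro j hj
        have hm := haI j hj
        have e : ((x.1 + (j : ℤ) * (0 : ℤ), x.2 + (j : ℤ) * (-1 : ℤ)) : ℤ × ℤ)
            = (x.1, x.2 - (j : ℤ)) := by
          simp only [Prod.mk.injEq]; constructor <;> ring
        rwa [e] at hm
      have hbS' : ((x.1, x.2 + (nR : ℤ) + 1) : ℤ × ℤ) ∈ S := by
        have e : ((x.1 + ((nR : ℤ) + 1) * (0 : ℤ), x.2 + ((nR : ℤ) + 1) * (1 : ℤ)) : ℤ × ℤ)
            = (x.1, x.2 + (nR : ℤ) + 1) := by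
          simp only [Prod.mk.injEq]; constructor <;> ring
        rwa [e] at hbS
      have hbI' : ∀ j : ℕ, j ≤ nR → ((x.1, x.2 + (j : ℤ)) : ℤ × ℤ) ∈ I := by
        intro j hj
        have hm := hbI j hj
        have e : ((x.1 + (j : ℤ) * (0 : ℤ), x.2 + (j : ℤ) * (1 : ℤ)) : ℤ × ℤ)
            = (x.1, x.2 + (j : ℤ)) := by
          simp only [Prod.mk.injEq]; constructor <;> ring
        rwa [e] at hm
      set y0 : ℤ := x.2 - (nL : ℤ) - 1 with hy0
      have hmem : ∀ i : ℕ, i ≤ nL + nR + 2 → ((x.1, y0 + (i : ℤ)) : ℤ × ℤ) ∈ D := by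
        intro i hi
        rcases Nat.eq_zero_or_pos i with rfl | hipos
        · have e : ((x.1, y0 + ((0 : ℕ) : ℤ)) : ℤ × ℤ) = (x.1, y0) := by
            simp only [Prod.mk.injEq]; exact ⟨by trivial, by push_cast; ring⟩
          rw [e]; exact hSD haS'
        rcases le_or_gt i (nL + 1) with hle | hgt
        · have hm := haI' (nL + 1 - i) (by omega)
          have e : ((x.1, x.2 - ((nL + 1 - i : ℕ) : ℤ)) : ℤ × ℤ) = (x.1, y0 + (i : ℤ)) := by
            simp only [Prod.mk.injEq]; exact ⟨by trivial, by omega⟩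
          rw [e] at hm; exact hID hm
        rcases le_or_gt i (nL + nR + 1) with hle2 | hgt2
        · have hm := hbI' (i - (nL + 1)) (by omega)
          have e : ((x.1, x.2 + ((i - (nL + 1) : ℕ) : ℤ)) : ℤ × ℤ) = (x.1, y0 + (i : ℤ)) := by
            simp only [Prod.mk.injEq]; exact ⟨by trivial, by omega⟩
          rw [e] at hm; exact hID hm
        · have e : ((x.1, x.2 + (nR : ℤ) + 1) : ℤ × ℤ) = (x.1, y0 + (i : ℤ)) := by
            simp only [Prod.mk.injEq]; exact ⟨by trivial, by omega⟩
          rw [e] at hbS'; exact hSD hbS'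
      have h0 : f (x.1, y0) = (x.1, y0) := hfix _ haS'
      have hk' : f (x.1, y0 + ((nL + nR + 2 : ℕ) : ℤ)) = (x.1, y0 + ((nL + nR + 2 : ℕ) : ℤ)) := by
        have e : ((x.1, x.2 + (nR : ℤ) + 1) : ℤ × ℤ)
            = (x.1, y0 + ((nL + nR + 2 : ℕ) : ℤ)) := by
          simp only [Prod.mk.injEq]; exact ⟨by trivial, by omega⟩
        rw [← e]; exact hfix _ hbS'
      have hr := vertRigid hu hf x.1 y0 (nL + nR + 2) hmem h0 hk' (nL + 1) (by omega)
      have ex : ((x.1, y0 + ((nL + 1 : ℕ) : ℤ)) : ℤ × ℤ) = x := by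
        have e1 : y0 + ((nL + 1 : ℕ) : ℤ) = x.2 := by omega
        rw [e1]
      rw [ex] at hr
      omega
    exact Prod.ext_iff.mpr ⟨hfx1, hfx2⟩
  exact ⟨⟨hSD, fun f _ hc hfix => key 1 le_rfl f hc hfix⟩,
    ⟨hSD, fun f _ hc hfix => key 2 (by norm_num) f hc hfix⟩⟩
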